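/- Let f : M → M be a continuous map on a compact metric space M equipped with a Borel probability measure Leb of full support. Then every physical-like (SRB-like) measure μ is supported on the Hausdorff-metric closure of the family of omega-limit sets: there exists a closed set Λ that is a Hausdorff limit of omega-limit sets ω_f(x_n) with μ(Λ) = 1. -/

import Mathlib

open MeasureTheory Filter Topology Set
open scoped ENNReal NNReal

variable {X : Type*} [MetricSpace X] [CompactSpace X] [MeasurableSpace X] [BorelSpace X]

/-- The empirical (time-average) measure `Υ_{n+1}(x) = (1/(n+1)) ∑_{j=0}^{n} δ_{f^j x}`. -/
noncomputable def empMeas (f : X → X) (x : X) (n : ℕ) : Measure X :=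
  ((n + 1 : ℝ≥0∞))⁻¹ • ∑ j ∈ Finset.range (n + 1), Measure.dirac (f^[j] x)

instance empMeas_prob (f : X → X) (x : X) (n : ℕ) : IsProbabilityMeasure (empMeas f x n) := by
  constructor
  simp only [empMeas, Measure.smul_apply, Measure.coe_finset_sum, Finset.sum_apply,
    MeasureTheory.measure_univ, Finset.sum_const, Finset.card_range, nsmul_eq_mul, mul_one,
    smul_eq_mul]
  rw [show ((n : ℝ≥0∞) + 1) = ((n + 1 : ℕ) : ℝ≥0∞) by push_cast; ring,
    ENNReal.inv_mul_cancel] <;> simp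

/-- The empirical measure as a probability measure. -/
noncomputable def empP (f : X → X) (x : X) (n : ℕ) : ProbabilityMeasure X :=
  ⟨empMeas f x n, empMeas_prob f x n⟩

/-- The p-omega-limit set: all weak* limits of subsequences of the empirical measures. -/
def pOmega (f : X → X) (x : X) : Set (ProbabilityMeasure X) :=
  {μ | ∃ φ : ℕ → ℕ, StrictMono φ ∧ Tendsto (fun i => empP f x (φ i)) atTop (𝓝 μ)}

/-- The omega-limit set of a point. -/
def omegaSet (f : X → X) (x : X) : Set X :=
  ⋂ N : ℕ, closure {y | ∃ n ≥ N, f^[n] x = y}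

/-- An invariant probability measure. -/
def InvMeas (f : X → X) (μ : ProbabilityMeasure X) : Prop :=
  ∀ A : Set X, MeasurableSet A → μ.toMeasure (f ⁻¹' A) = μ.toMeasure A

/-- `μ` is physical-like (SRB-like / observable) w.r.t. the reference measure `Leb`:
every weak* neighborhood basin has positive reference measure. -/
def PhysicalLike (f : X → X) (Leb : Measure X) (μ : ProbabilityMeasure X) : Prop :=
  ∀ U ∈ 𝓝 μ, 0 < Leb {x | ∃ ν ∈ pOmega f x, ν ∈ U}

/-- An ε-chain from `a` to `b` with all points inside `A`. -/
def IsEpsChain (f : X → X) (ε : ℝ) (A : Set X) (a b : X) : Prop :=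
  ∃ n : ℕ, 0 < n ∧ ∃ c : ℕ → X, c 0 = a ∧ c n = b ∧ (∀ i ≤ n, c i ∈ A) ∧
    ∀ i < n, dist (f (c i)) (c (i + 1)) < ε

/-- A nonempty compact invariant internally chain transitive set. -/
def InternallyChainTransitive (f : X → X) (A : Set X) : Prop :=
  A.Nonempty ∧ IsCompact A ∧ f '' A ⊆ A ∧ ∀ a ∈ A, ∀ b ∈ A, ∀ ε > 0, IsEpsChain f ε A a b

/-- Periodic shadowing property. -/
def PeriodicShadowing (f : X → X) : Prop :=
  ∀ ε > 0, ∃ δ > 0, ∀ (x : ℕ → X) (T : ℕ), 0 < T →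
    (∀ i, dist (f (x i)) (x (i + 1)) < δ) → (∀ i, x (i + T) = x i) →
    ∃ y : X, (∃ p : ℕ, 0 < p ∧ f^[p] y = y) ∧ ∀ n, dist (f^[n] y) (x n) < ε

/-- The periodic gluing orbit property of `Λ`. -/
def PeriodicGluing (f : X → X) (Λ : Set X) : Prop :=
  ∀ ε > 0, ∃ M : ℕ, ∀ k : ℕ, 0 < k → ∀ (xs : ℕ → X) (ns : ℕ → ℕ),
    (∀ i < k, xs i ∈ Λ) → (∀ i < k, 1 ≤ ns i) →
    ∃ ms : ℕ → ℕ, (∀ i < k, ms i ≤ M) ∧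
      ∃ z : X, f^[∑ j ∈ Finset.range k, (ns j + ms j)] z = z ∧
        ∀ i < k, ∀ l < ns i,
          dist (f^[(∑ j ∈ Finset.range i, (ns j + ms j)) + l] z) (f^[l] (xs i)) < ε

/-- The set of periodic measures (uniform measures on periodic orbits). -/
def periodicMeasures (f : X → X) : Set (ProbabilityMeasure X) :=
  {μ | ∃ z : X, ∃ m : ℕ, f^[m + 1] z = z ∧ μ = empP f z m}

/-- The topological support of a measure. -/
def mSupport (μ : Measure X) : Set X := {y | ∀ U ∈ 𝓝 y, 0 < μ U}

lemma isClosed_omegaSet (f : X → X) (x : X) : IsClosed (omegaSet f x) :=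
  isClosed_iInter fun _ => isClosed_closure

lemma omegaSet_nonempty (f : X → X) (x : X) : (omegaSet f x).Nonempty := by
  apply IsCompact.nonempty_iInter_of_sequence_nonempty_isCompact_isClosed
  · intro n; apply closure_mono; rintro y ⟨m, hm, rfl⟩; exact ⟨m, by omega, rfl⟩
  · intro n; exact ⟨f^[n] x, subset_closure ⟨n, le_rfl, rfl⟩⟩
  · exact isClosed_closure.isCompact
  · intro n; exact isClosed_closure

lemma pOmega_measure_omegaSet (f : X → X) (x : X) {ν : ProbabilityMeasure X}
    (hν : ν ∈ pOmega f x) : ν.toMeasure (omegaSet f x) = 1 := by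
  obtain ⟨φ, hφ, htend⟩ := hν
  set C : ℕ → Set X := fun N => closure {y | ∃ n ≥ N, f^[n] x = y} with hC
  have hCclosed : ∀ N, IsClosed (C N) := fun N => isClosed_closure
  have key : ∀ N, ν.toMeasure (C N) = 1 := by
    intro N
    have hle : ∀ m : ℕ, (1 : ℝ≥0∞) - N / (m + 1) ≤ (empP f x m : Measure X) (C N) := by
      intro m
      have hcompl : (empP f x m : Measure X) (C N)ᶜ ≤ (N : ℝ≥0∞) / (m + 1) := by
        have hsum : ∑ j ∈ Finset.range (m + 1), Measure.dirac (f^[j] x) (C N)ᶜ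
            ≤ (N : ℝ≥0∞) := by
          calc ∑ j ∈ Finset.range (m + 1), Measure.dirac (f^[j] x) (C N)ᶜ
              ≤ ∑ j ∈ Finset.range (m + 1), (if j < N then (1 : ℝ≥0∞) else 0) := by
                apply Finset.sum_le_sum
                intro j _
                split_ifs with h
                · exact le_trans (measure_mono (subset_univ _)) (by simp)
                · rw [Measure.dirac_apply' _ (hCclosed N).measurableSet.compl,
                    Set.indicator_of_notMem]
                  simp only [mem_compl_iff, not_not]
                  exact subset_closure ⟨j, le_of_not_gt h, rfl⟩
            _ = (((Finset.range (m + 1)).filter (· < N)).card : ℝ≥0∞) := by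
                rw [Finset.sum_boole]
            _ ≤ (N : ℝ≥0∞) := by
                have : ((Finset.range (m + 1)).filter (· < N)).card ≤ N := by
                  refine le_trans (Finset.card_le_card ?_) (le_of_eq (Finset.card_range N))
                  intro j hj
                  simp only [Finset.mem_filter] at hj
                  exact Finset.mem_range.2 hj.2
                exact_mod_cast this
        have : (empP f x m : Measure X) (C N)ᶜ
            = ((m + 1 : ℝ≥0∞))⁻¹ * ∑ j ∈ Finset.range (m + 1),
              Measure.dirac (f^[j] x) (C N)ᶜ := by
          simp [empP, empMeas]
        rw [this, ENNReal.div_eq_inv_mul]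
        exact mul_le_mul_right hsum _
      have hadd : (1 : ℝ≥0∞) ≤ (empP f x m : Measure X) (C N) + (N : ℝ≥0∞) / (m + 1) := by
        have := measure_add_measure_compl (μ := (empP f x m : Measure X))
          (hCclosed N).measurableSet
        rw [measure_univ] at this
        calc (1 : ℝ≥0∞) = (empP f x m : Measure X) (C N)
              + (empP f x m : Measure X) (C N)ᶜ := this.symm
          _ ≤ _ := add_le_add_right hcompl _
      exact tsub_le_iff_right.2 hadd
    have h0 : Tendsto (fun i => (N : ℝ≥0∞) / (φ i + 1)) atTop (𝓝 0) := by
      have h1 : Tendsto (fun i => ((φ i + 1 : ℕ) : ℝ≥0∞)⁻¹) atTop (𝓝 0) :=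
        ENNReal.tendsto_inv_nat_nhds_zero.comp
          ((tendsto_add_atTop_nat 1).comp hφ.tendsto_atTop)
      have := ENNReal.Tendsto.const_mul (a := (N : ℝ≥0∞)) h1 (Or.inr (ENNReal.natCast_ne_top N))
      rw [mul_zero] at this
      convert this using 2 with i
      rw [ENNReal.div_eq_inv_mul, mul_comm]
      push_cast
      ring_nf
    have h1 : Tendsto (fun i => (1 : ℝ≥0∞) - (N : ℝ≥0∞) / (φ i + 1)) atTop (𝓝 1) := by
      have := ENNReal.Tendsto.sub (tendsto_const_nhds (x := (1:ℝ≥0∞))) h0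
        (Or.inl ENNReal.one_ne_top)
      simpa using this
    have h2 : Tendsto (fun i => (empP f x (φ i) : Measure X) (C N)) atTop (𝓝 1) :=
      tendsto_of_tendsto_of_tendsto_of_le_of_le h1 tendsto_const_nhds
        (fun i => hle (φ i)) (fun i => prob_le_one)
    have hlimsup := ProbabilityMeasure.limsup_measure_closed_le_of_tendsto htend (hCclosed N)
    rw [h2.limsup_eq] at hlimsup
    exact le_antisymm prob_le_one hlimsup
  have hcomp : ν.toMeasure (omegaSet f x)ᶜ = 0 := by
    rw [show omegaSet f x = ⋂ N, C N from rfl, Set.compl_iInter]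
    refine measure_iUnion_null fun N => ?_
    rw [measure_compl (hCclosed N).measurableSet (measure_ne_top _ _), measure_univ, key N,
      tsub_self]
  rw [← prob_compl_eq_zero_iff (isClosed_omegaSet f x).measurableSet]
  exact hcomp


/-- Every physical-like measure gives full measure to a Hausdorff limit of
omega-limit sets. -/
theorem physicalLike_supported_on_hausdorff_limit_of_omegaSets
    (f : X → X) (hf : Continuous f) (Leb : Measure X) [IsProbabilityMeasure Leb]
    (hsupp : ∀ U : Set X, IsOpen U → U.Nonempty → 0 < Leb U)
    (μ : ProbabilityMeasure X) (hμ : PhysicalLike f Leb μ) :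
    ∃ Λ : Set X, IsClosed Λ ∧
      (∃ xs : ℕ → X,
        Tendsto (fun n => Metric.hausdorffDist (omegaSet f (xs n)) Λ) atTop (𝓝 0)) ∧
      μ.toMeasure Λ = 1 := by
  classical
  obtain ⟨B, hB⟩ := (𝓝 μ).exists_antitone_basis
  have hx : ∀ k : ℕ, ∃ x : X, ∃ ν ∈ pOmega f x, ν ∈ B k := by
    intro k
    have hpos := hμ (B k) (hB.1.mem_of_mem (i := k) trivial)
    obtain ⟨x, hx⟩ := nonempty_of_measure_ne_zero hpos.ne'
    exact ⟨x, hx⟩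
  choose x ν hνp hνB using hx
  have hνtend : Tendsto ν atTop (𝓝 μ) := hB.tendsto hνB
  let K : ℕ → TopologicalSpace.NonemptyCompacts X := fun k =>
    ⟨⟨omegaSet f (x k), (isClosed_omegaSet f (x k)).isCompact⟩, omegaSet_nonempty f (x k)⟩
  obtain ⟨L, -, ψ, hψ, hLtend⟩ := isCompact_univ.tendsto_subseq (fun k => Set.mem_univ (K k))
  have hdist : Tendsto (fun n => dist (K (ψ n)) L) atTop (𝓝 0) :=
    tendsto_iff_dist_tendsto_zero.mp hLtend
  have hdist' : Tendsto (fun n => Metric.hausdorffDist (omegaSet f (x (ψ n))) (L : Set X))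
      atTop (𝓝 0) := by
    exact hdist
  refine ⟨L, L.isCompact.isClosed, ⟨fun n => x (ψ n), hdist'⟩, ?_⟩
  have hνψ : Tendsto (fun n => ν (ψ n)) atTop (𝓝 μ) := hνtend.comp hψ.tendsto_atTop
  have hfull : ∀ ε : ℝ, 0 < ε → μ.toMeasure (Metric.cthickening ε (L : Set X)) = 1 := by
    intro ε hε
    have hev : ∀ᶠ n in atTop,
        (ν (ψ n) : Measure X) (Metric.cthickening ε (L : Set X)) = 1 := by
      filter_upwards [hdist'.eventually (gt_mem_nhds hε)] with n hn
      have hsub : omegaSet f (x (ψ n)) ⊆ Metric.cthickening ε (L : Set X) := by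
        intro y hy
        have hne : EMetric.hausdorffEdist (omegaSet f (x (ψ n))) (L : Set X) ≠ ⊤ :=
          Metric.hausdorffEdist_ne_top_of_nonempty_of_bounded (omegaSet_nonempty _ _)
            L.nonempty ((K (ψ n)).isCompact.isBounded) L.isCompact.isBounded
        have h1 : Metric.infDist y (L : Set X) < ε :=
          lt_of_le_of_lt (Metric.infDist_le_hausdorffDist_of_mem hy hne) hn
        exact Metric.thickening_subset_cthickening _ _
          ((Metric.mem_thickening_iff_infDist_lt L.nonempty).2 h1)
      refine le_antisymm prob_le_one ?_
      calc (1 : ℝ≥0∞) = (ν (ψ n) : Measure X) (omegaSet f (x (ψ n))) :=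
            (pOmega_measure_omegaSet f (x (ψ n)) (hνp (ψ n))).symm
        _ ≤ _ := measure_mono hsub
    have hlimsup := ProbabilityMeasure.limsup_measure_closed_le_of_tendsto hνψ
      (Metric.isClosed_cthickening (δ := ε) (E := (L : Set X)))
    rw [Filter.limsup_congr hev, Filter.limsup_const] at hlimsup
    exact le_antisymm prob_le_one hlimsup
  have htd : Tendsto (fun r : ℝ => μ.toMeasure (Metric.cthickening r (L : Set X))) (𝓝[>] 0)
      (𝓝 (μ.toMeasure (L : Set X))) :=
    (tendsto_measure_cthickening_of_isClosed ⟨1, one_pos, measure_ne_top _ _⟩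
      L.isCompact.isClosed).mono_left nhdsWithin_le_nhds
  have hconst : Tendsto (fun r : ℝ => μ.toMeasure (Metric.cthickening r (L : Set X))) (𝓝[>] 0)
      (𝓝 (1 : ℝ≥0∞)) := by
    apply Filter.Tendsto.congr' _ (tendsto_const_nhds (x := (1 : ℝ≥0∞)))
    filter_upwards [self_mem_nhdsWithin] with r hr
    exact (hfull r hr).symm
  exact tendsto_nhds_unique htd hconst
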